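/- arXiv:2410.10691 — 2 statements merged into one kernel-verified Lean document; each statement's English description precedes it below -/
import Mathlib

section
/- Tree-reversal bijection: for a finite strongly connected reversible graph G and vertices i ≠ j, the map Φ_{i,j}: Θ_i → Θ_j that takes a spanning tree T rooted at i and reverses the edges on the unique tree path from j to i is a well-defined bijection between the sets of spanning trees rooted at i and rooted at j. -/
open Finset

attribute [local instance] Classical.propDecidable

/-- `i → j` is an edge of the graph when its label is positive. -/
def IsEdge {n : ℕ} (ℓ : Fin n → Fin n → ℝ) (i j : Fin n) : Prop := 0 < ℓ i j

/-- Strong connectivity: any two vertices are joined by a directed path of edges. -/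
def StronglyConnected {n : ℕ} (ℓ : Fin n → Fin n → ℝ) : Prop :=
  ∀ i j : Fin n, Relation.ReflTransGen (IsEdge ℓ) i j

/-- Reversibility: `i → j` is an edge iff `j → i` is. -/
def Reversible {n : ℕ} (ℓ : Fin n → Fin n → ℝ) : Prop :=
  ∀ i j : Fin n, 0 < ℓ i j ↔ 0 < ℓ j i

/-- The Laplacian matrix: `L j i = ℓ i j` off the diagonal,
`L i i = -∑_{k ≠ i} ℓ i k`. -/
noncomputable def laplacianMatrix {n : ℕ} (ℓ : Fin n → Fin n → ℝ) :
    Matrix (Fin n) (Fin n) ℝ :=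
  fun j i => if j = i then -∑ k ∈ univ.filter (· ≠ i), ℓ i k else ℓ i j

/-- A spanning tree rooted at `r`, encoded as a parent map `t`: the root is fixed,
every other vertex has a positively-labelled edge to its parent, and iterating
the parent map from any vertex reaches the root. -/
def IsSpanningTree {n : ℕ} (ℓ : Fin n → Fin n → ℝ) (r : Fin n)
    (t : Fin n → Fin n) : Prop :=
  t r = r ∧ (∀ v, v ≠ r → 0 < ℓ v (t v)) ∧ ∀ v, ∃ k, t^[k] v = r

/-- `Θ_r`: the set of spanning trees rooted at `r`. -/
noncomputable def Trees {n : ℕ} (ℓ : Fin n → Fin n → ℝ) (r : Fin n) :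
    Finset (Fin n → Fin n) :=
  univ.filter (IsSpanningTree ℓ r)

/-- `q(T)`: the product of the edge labels over the edges of the tree. -/
noncomputable def treeWeight {n : ℕ} (ℓ : Fin n → Fin n → ℝ) (r : Fin n)
    (t : Fin n → Fin n) : ℝ :=
  ∏ v ∈ univ.filter (· ≠ r), ℓ v (t v)

/-- A directed path from `i` to `j`, as the list of visited vertices. -/
def IsPathFrom {n : ℕ} (ℓ : Fin n → Fin n → ℝ) (i j : Fin n)
    (p : List (Fin n)) : Prop :=
  p.Chain' (IsEdge ℓ) ∧ p.head? = some i ∧ p.getLast? = some j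

/-- A minimal (self-avoiding) path from `i` to `j`: all vertices distinct. -/
def IsMinPathFrom {n : ℕ} (ℓ : Fin n → Fin n → ℝ) (i j : Fin n)
    (p : List (Fin n)) : Prop :=
  IsPathFrom ℓ i j p ∧ p.Nodup

/-- `S(P)`: the action / entropy change of a path, the sum of
`log (ℓ(a→b)/ℓ(b→a))` over its consecutive pairs `a → b`. -/
noncomputable def pathAction {n : ℕ} (ℓ : Fin n → Fin n → ℝ)
    (p : List (Fin n)) : ℝ :=
  ((p.zip p.tail).map (fun e => Real.log (ℓ e.1 e.2 / ℓ e.2 e.1))).sum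

/-- `q(P)`: the product of the labels over the edges of a path. -/
noncomputable def pathWeight {n : ℕ} (ℓ : Fin n → Fin n → ℝ)
    (p : List (Fin n)) : ℝ :=
  ((p.zip p.tail).map (fun e => ℓ e.1 e.2)).prod

/-- The path from `i` to the root `r` along the parent map `t` (fuel `k`). -/
def treePathAux {n : ℕ} (t : Fin n → Fin n) (r : Fin n) :
    ℕ → Fin n → List (Fin n)
  | 0, i => [i]
  | k + 1, i => if i = r then [i] else i :: treePathAux t r k (t i)

/-- `T_i`: the unique path from `i` to the root `r` on the spanning tree `t`. -/
def treePath {n : ℕ} (t : Fin n → Fin n) (r : Fin n) (i : Fin n) :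
    List (Fin n) :=
  treePathAux t r n i

/-- The cycle condition: `S(C) = 0` for every directed cycle `C`
(a directed path whose first and last vertices agree). -/
def CycleCondition {n : ℕ} (ℓ : Fin n → Fin n → ℝ) : Prop :=
  ∀ p : List (Fin n), p.Chain' (IsEdge ℓ) → p.head? = p.getLast? →
    pathAction ℓ p = 0

/-- The tree-reversal map `Φ_{r,j}`: given a tree `t` rooted at `r`, reverse the
edges on the unique tree path from `j` to `r`, obtaining a tree rooted at `j`. -/
def reverseTree {n : ℕ} (t : Fin n → Fin n) (r j : Fin n) : Fin n → Fin n :=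
  fun v =>
    (((treePath t r j).zip (treePath t r j).tail).find? (fun e => e.2 == v)).elim
      (if v = j then j else t v) (fun e => e.1)
lemma treePathAux_root {n : ℕ} (t : Fin n → Fin n) (r : Fin n) (f : ℕ) :
    treePathAux t r f r = [r] := by
  cases f <;> simp [treePathAux]

lemma treePathAux_formula {n : ℕ} (t : Fin n → Fin n) (r : Fin n) :
    ∀ (m fuel : ℕ) (i : Fin n), t^[m] i = r → (∀ s < m, t^[s] i ≠ r) →
      m ≤ fuel → treePathAux t r fuel i = (List.range (m+1)).map (fun s => t^[s] i)
  | 0, fuel, i, hm, _, _ => by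
      simp only [Function.iterate_zero, id_eq] at hm
      subst hm; simp [treePathAux_root]
  | m+1, fuel, i, hm, hmin, hf => by
      have hi : i ≠ r := by simpa using hmin 0 (Nat.succ_pos m)
      obtain ⟨f', rfl⟩ : ∃ f', fuel = f' + 1 := ⟨fuel - 1, by omega⟩
      rw [show treePathAux t r (f'+1) i = i :: treePathAux t r f' (t i) from by
        simp [treePathAux, hi]]
      rw [treePathAux_formula t r m f' (t i)
        (by rw [← Function.iterate_succ_apply]; exact hm)
        (fun s hs => by rw [← Function.iterate_succ_apply]; exact hmin (s+1) (by omega))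
        (by omega)]
      simp [List.range_succ_eq_map, List.map_map, Function.comp,
        Function.iterate_succ_apply]

lemma iterate_inj {α : Type*} {t : α → α} {j r : α} {m : ℕ}
    (hm : t^[m] j = r) (hmin : ∀ s < m, t^[s] j ≠ r) :
    ∀ a, a ≤ m → ∀ b, b ≤ m → t^[a] j = t^[b] j → a = b := by
  have key : ∀ a b, a < b → b ≤ m → t^[a] j = t^[b] j → False := by
    intro a b hab hbm heq
    apply hmin (m - (b - a)) (by omega)
    rw [show m - (b - a) = (m - b) + a from by omega, Function.iterate_add_apply,
      heq, ← Function.iterate_add_apply, show m - b + b = m from by omega, hm]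
  intro a ha b hb heq
  rcases lt_trichotomy a b with h | h | h
  · exact (key a b h hb heq).elim
  · exact h
  · exact (key b a h ha heq.symm).elim

lemma treePath_spec {n : ℕ} {ℓ : Fin n → Fin n → ℝ} {r : Fin n} {t : Fin n → Fin n}
    (ht : IsSpanningTree ℓ r t) (j : Fin n) :
    ∃ m, m < n ∧ t^[m] j = r ∧ (∀ s < m, t^[s] j ≠ r) ∧
      treePath t r j = (List.range (m+1)).map (fun s => t^[s] j) := by
  obtain ⟨-, -, hreach⟩ := ht
  have hex := hreach j
  set m := Nat.find hex with hmdef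
  have hm : t^[m] j = r := Nat.find_spec hex
  have hmin : ∀ s < m, t^[s] j ≠ r := fun s hs => Nat.find_min hex hs
  have hinj := iterate_inj hm hmin
  have hnd : ((List.range (m+1)).map (fun s => t^[s] j)).Nodup := by
    refine List.Nodup.map_on ?_ List.nodup_range
    intro a ha b hb heq
    exact hinj a (by simp at ha; omega) b (by simp at hb; omega) heq
  have hlen : m + 1 ≤ n := by
    have := hnd.length_le_card
    simpa using this
  exact ⟨m, by omega, hm, hmin, treePathAux_formula t r m n j hm hmin (by omega)⟩

lemma zip_tail_map_range {α : Type*} : ∀ (k : ℕ) (f : ℕ → α),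
    (((List.range (k+1)).map f).zip (((List.range (k+1)).map f).tail))
      = (List.range k).map (fun s => (f s, f (s+1)))
  | 0, _ => by simp [List.range_succ]
  | k+1, f => by
      have ih := zip_tail_map_range k (fun s => f (s+1))
      simp only [List.range_succ_eq_map, List.map_map, Function.comp_def] at ih ⊢
      simpa [List.zip_cons_cons, Nat.succ_eq_add_one, Function.comp_def] using ih
lemma reverseTree_on_path {n : ℕ} {t : Fin n → Fin n} {r j : Fin n} {m : ℕ}
    {f : ℕ → Fin n}
    (hp : treePath t r j = (List.range (m+1)).map f)
    (hinj : ∀ a, a ≤ m → ∀ b, b ≤ m → f a = f b → a = b)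
    {s : ℕ} (hs : s < m) :
    reverseTree t r j (f (s+1)) = f s := by
  unfold reverseTree
  rw [hp, zip_tail_map_range]
  set z := (List.range m).map (fun s => (f s, f (s+1))) with hz
  have hmem : (f s, f (s+1)) ∈ z := by
    rw [hz]; exact List.mem_map.2 ⟨s, List.mem_range.2 hs, rfl⟩
  have hsome : (z.find? (fun e => e.2 == f (s+1))).isSome := by
    rw [List.find?_isSome]
    exact ⟨_, hmem, by simp⟩
  obtain ⟨e, he⟩ := Option.isSome_iff_exists.1 hsome
  have hemem := List.mem_of_find?_eq_some he
  have hepred := List.find?_some he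
  rw [hz] at hemem
  obtain ⟨s', hs', hes'⟩ := List.mem_map.1 hemem
  rw [List.mem_range] at hs'
  have : f (s'+1) = f (s+1) := by
    have h2 := of_decide_eq_true hepred
    rw [← hes'] at h2
    exact h2
  have hss : s' = s := by
    have := hinj (s'+1) (by omega) (s+1) (by omega) this
    omega
  rw [he]
  simp [← hes', hss]

lemma reverseTree_off_path {n : ℕ} {t : Fin n → Fin n} {r j : Fin n} {m : ℕ}
    {f : ℕ → Fin n}
    (hp : treePath t r j = (List.range (m+1)).map f)
    {v : Fin n} (hv : ∀ s, s < m → v ≠ f (s+1)) :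
    reverseTree t r j v = if v = j then j else t v := by
  unfold reverseTree
  rw [hp, zip_tail_map_range]
  have hnone : ((List.range m).map (fun s => (f s, f (s+1)))).find?
      (fun e => e.2 == v) = none := by
    rw [List.find?_eq_none]
    intro e he
    obtain ⟨s, hs, rfl⟩ := List.mem_map.1 he
    rw [List.mem_range] at hs
    simp [(hv s hs).symm]
  rw [hnone]
  rfl
lemma reverseTree_mem {n : ℕ} {ℓ : Fin n → Fin n → ℝ} (hrev : Reversible ℓ)
    {r : Fin n} {t : Fin n → Fin n} (ht : IsSpanningTree ℓ r t)
    {j : Fin n} (hjr : j ≠ r) : IsSpanningTree ℓ j (reverseTree t r j) := by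
  obtain ⟨m, hmn, hm, hmin, hp⟩ := treePath_spec ht j
  set f : ℕ → Fin n := fun s => t^[s] j with hf
  have hinj := iterate_inj hm hmin
  have hf0 : f 0 = j := rfl
  have hm0 : m ≠ 0 := by intro h; exact hjr (by rw [← hm, h]; rfl)
  set t' := reverseTree t r j with ht'
  have hroot : t' j = j := by
    rw [ht', reverseTree_off_path hp (fun s hs hjf => by
      have := hinj 0 (by omega) (s+1) (by omega) hjf
      omega)]
    simp
  have hstep : ∀ s, s < m → t' (f (s+1)) = f s := fun s hs =>
    reverseTree_on_path hp hinj hs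
  have hreachP : ∀ u, u ≤ m → t'^[u] (f u) = j := by
    intro u; induction u with
    | zero => intro _; exact hf0
    | succ u ih =>
      intro hu
      rw [Function.iterate_succ_apply, hstep u (by omega)]
      exact ih (by omega)
  refine ⟨hroot, ?_, ?_⟩
  · intro v hv
    by_cases hcase : ∃ s, s < m ∧ v = f (s+1)
    · obtain ⟨s, hs, rfl⟩ := hcase
      rw [hstep s hs]
      have hfs : f (s+1) = t (f s) := Function.iterate_succ_apply' t s j
      rw [hfs]
      exact (hrev _ _).1 (ht.2.1 (f s) (hmin s hs))
    · push_neg at hcase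
      rw [ht', reverseTree_off_path hp (fun s hs => hcase s hs), if_neg hv]
      refine ht.2.1 v ?_
      intro hvr
      exact hcase (m-1) (by omega) (by rw [hvr, ← hm]; congr 1; omega)
  · intro v
    have hex : ∃ k, ∃ u, u ≤ m ∧ t^[k] v = f u := by
      obtain ⟨k, hk⟩ := ht.2.2 v
      exact ⟨k, m, le_rfl, by rw [hk, ← hm]⟩
    set c := Nat.find hex with hcdef
    have hc := Nat.find_spec hex
    have hcmin : ∀ s, s < c → ¬∃ u, u ≤ m ∧ t^[s] v = f u :=
      fun s hs => Nat.find_min hex hs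
    have hagree : ∀ s, s ≤ c → t'^[s] v = t^[s] v := by
      intro s; induction s with
      | zero => intro _; rfl
      | succ s ih =>
        intro hs
        rw [Function.iterate_succ_apply', Function.iterate_succ_apply',
          ih (by omega)]
        have hnot : ∀ u, u ≤ m → t^[s] v ≠ f u := by
          intro u hu heq; exact hcmin s (by omega) ⟨u, hu, heq⟩
        rw [ht', reverseTree_off_path hp (fun u hu => hnot (u+1) (by omega)),
          if_neg (show ¬ t^[s] v = j from hnot 0 (Nat.zero_le m))]
    obtain ⟨u, hu, hcu⟩ := hc
    refine ⟨u + c, ?_⟩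
    rw [Function.iterate_add_apply, hagree c le_rfl, hcu]
    exact hreachP u hu
lemma reverseTree_reverseTree {n : ℕ} {ℓ : Fin n → Fin n → ℝ} (hrev : Reversible ℓ)
    {r : Fin n} {t : Fin n → Fin n} (ht : IsSpanningTree ℓ r t)
    {j : Fin n} (hjr : j ≠ r) : reverseTree (reverseTree t r j) j r = t := by
  obtain ⟨m, hmn, hm, hmin, hp⟩ := treePath_spec ht j
  set f : ℕ → Fin n := fun s => t^[s] j with hf
  have hinj := iterate_inj hm hmin
  have hm0 : m ≠ 0 := fun h => hjr (by rw [← hm, h]; rfl)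
  set t' := reverseTree t r j with ht'
  have ht's : IsSpanningTree ℓ j t' := reverseTree_mem hrev ht hjr
  have hstep : ∀ s, s < m → t' (f (s+1)) = f s := fun s hs =>
    reverseTree_on_path hp hinj hs
  have hkey : ∀ s, s ≤ m → t'^[s] r = f (m - s) := by
    intro s; induction s with
    | zero => intro _; simp [← hm, hf]
    | succ s ih =>
      intro hs
      rw [Function.iterate_succ_apply', ih (by omega),
        show m - s = (m - (s+1)) + 1 from by omega]
      exact hstep _ (by omega)
  obtain ⟨m', hm'n, hm', hmin', hp'⟩ := treePath_spec ht's r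
  have hmm : m' = m := by
    by_contra hne
    rcases lt_or_gt_of_ne hne with h | h
    · have hk := hkey m' (by omega)
      rw [hm'] at hk
      have := hinj 0 (by omega) (m - m') (by omega) hk
      omega
    · refine hmin' m h ?_
      rw [hkey m le_rfl]
      show f (m - m) = j
      rw [Nat.sub_self]
      rfl
  have hq : treePath t' j r = (List.range (m+1)).map (fun s => f (m - s)) := by
    rw [hp', hmm]
    refine List.map_congr_left ?_
    intro s hs
    exact hkey s (by simpa using Nat.lt_succ_iff.1 (List.mem_range.1 hs))
  have hinj' : ∀ a, a ≤ m → ∀ b, b ≤ m → f (m - a) = f (m - b) → a = b := by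
    intro a ha b hb heq
    have := hinj (m - a) (by omega) (m - b) (by omega) heq
    omega
  funext v
  by_cases hcase : ∃ u, u < m ∧ v = f u
  · obtain ⟨u, hu, rfl⟩ := hcase
    have happ : reverseTree t' j r (f u) = f (u+1) := by
      have h := reverseTree_on_path (f := fun s => f (m - s)) hq hinj'
        (s := m - u - 1) (by omega)
      simpa [show m - (m - u - 1 + 1) = u from by omega,
        show m - (m - u - 1) = u + 1 from by omega] using h
    rw [happ]
    exact Function.iterate_succ_apply' t u j
  · push_neg at hcase
    have hoff := reverseTree_off_path (f := fun s => f (m - s)) hq (v := v)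
      (fun s hs => by
        have := hcase (m - (s+1)) (by omega)
        simpa using this)
    rw [hoff]
    by_cases hvr : v = r
    · rw [if_pos hvr, hvr]
      exact ht.1.symm
    · rw [if_neg hvr]
      have hnot : ∀ s, s < m → v ≠ f (s+1) := by
        intro s hs heq
        rcases eq_or_lt_of_le (show s + 1 ≤ m from hs) with h | h
        · exact hvr (by rw [heq, h]; exact hm)
        · exact hcase (s+1) h heq
      rw [ht', reverseTree_off_path hp hnot,
        if_neg (show ¬ v = j from hcase 0 (by omega))]
/-- The tree-reversal map `Φ_{i,j}`, which reverses the edges on the unique tree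
path from `j` to the root `i`, is a bijection from `Θ_i` onto `Θ_j`. -/
theorem reverseTree_bijOn {n : ℕ} (ℓ : Fin n → Fin n → ℝ)
    (hℓ : ∀ i j, 0 ≤ ℓ i j) (hsc : StronglyConnected ℓ) (hrev : Reversible ℓ)
    (i j : Fin n) (hij : i ≠ j) :
    Set.BijOn (fun t => reverseTree t i j) (Trees ℓ i : Set (Fin n → Fin n))
      (Trees ℓ j : Set (Fin n → Fin n)) := by
  have hmem : ∀ (r : Fin n) (t : Fin n → Fin n),
      t ∈ (Trees ℓ r : Set (Fin n → Fin n)) ↔ IsSpanningTree ℓ r t := by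
    intro r t
    simp [Trees]
  have h1 : Set.MapsTo (fun t => reverseTree t i j)
      (Trees ℓ i : Set (Fin n → Fin n)) (Trees ℓ j : Set (Fin n → Fin n)) := by
    intro t ht
    exact (hmem j _).2 (reverseTree_mem hrev ((hmem i t).1 ht) hij.symm)
  have h2 : Set.MapsTo (fun t => reverseTree t j i)
      (Trees ℓ j : Set (Fin n → Fin n)) (Trees ℓ i : Set (Fin n → Fin n)) := by
    intro t ht
    exact (hmem i _).2 (reverseTree_mem hrev ((hmem j t).1 ht) hij)
  refine Set.InvOn.bijOn ⟨?_, ?_⟩ h1 h2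
  · intro t ht
    exact reverseTree_reverseTree hrev ((hmem i t).1 ht) hij.symm
  · intro t ht
    exact reverseTree_reverseTree hrev ((hmem j t).1 ht) hij
end

section
/- Weight identity for the tree-reversal bijection: for T ∈ Θ_i and the bijection Φ_{i,j}: Θ_i → Θ_j obtained by reversing the unique tree path T_j from j to i, one has q(Φ_{i,j}(T)) = exp(-S(T_j)) · q(T). -/
open Finset

attribute [local instance] Classical.propDecidable

/-- The Laplacian matrix: `L j i = ℓ i j` off the diagonal,
`L i i = -∑_{k ≠ i} ℓ i k`. -/
noncomputable def labelLaplacian {n : ℕ} (ℓ : Fin n → Fin n → ℝ) :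
    Matrix (Fin n) (Fin n) ℝ :=
  fun j i => if j = i then -∑ k ∈ univ.filter (· ≠ i), ℓ i k else ℓ i j

section AuxRev

variable {n : ℕ} {T : Fin n → Fin n} {i : Fin n}

lemma find_eq_zero_iff' (h : ∀ v, ∃ k, T^[k] v = i) (v : Fin n) :
    Nat.find (h v) = 0 ↔ v = i := by
  rw [Nat.find_eq_zero]; simp

lemma find_succ' (h : ∀ v, ∃ k, T^[k] v = i) (v : Fin n) (hv : v ≠ i) :
    Nat.find (h v) = Nat.find (h (T v)) + 1 := by
  have h0 : Nat.find (h v) ≠ 0 := by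
    rw [Ne, find_eq_zero_iff' h v]; exact hv
  obtain ⟨k, hk⟩ := Nat.exists_eq_succ_of_ne_zero h0
  have hs := Nat.find_spec (h v)
  rw [hk, Function.iterate_succ_apply] at hs
  have h1 : Nat.find (h (T v)) ≤ k := Nat.find_le hs
  have h2 : Nat.find (h v) ≤ Nat.find (h (T v)) + 1 := by
    apply Nat.find_le
    rw [Function.iterate_succ_apply]
    exact Nat.find_spec (h (T v))
  omega

lemma iter_inj' (h : ∀ v, ∃ k, T^[k] v = i) (v : Fin n) {a b : ℕ}
    (ha : a ≤ Nat.find (h v)) (hb : b ≤ Nat.find (h v))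
    (hab : T^[a] v = T^[b] v) : a = b := by
  by_contra hne
  wlog hlt : a < b generalizing a b
  · exact this hb ha hab.symm (Ne.symm hne) (by omega)
  have key : T^[Nat.find (h v) - b + a] v = i := by
    calc T^[Nat.find (h v) - b + a] v
        = T^[Nat.find (h v) - b] (T^[a] v) := Function.iterate_add_apply T _ _ v
      _ = T^[Nat.find (h v) - b] (T^[b] v) := by rw [hab]
      _ = T^[Nat.find (h v) - b + b] v := (Function.iterate_add_apply T _ _ v).symm
      _ = i := by rw [Nat.sub_add_cancel hb]; exact Nat.find_spec (h v)
  have : Nat.find (h v) ≤ Nat.find (h v) - b + a := Nat.find_le key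
  omega

lemma find_lt' (h : ∀ v, ∃ k, T^[k] v = i) (v : Fin n) : Nat.find (h v) < n := by
  have hle : Nat.find (h v) + 1 ≤ n := by
    have hinj : Function.Injective (fun a : Fin (Nat.find (h v) + 1) => T^[a.1] v) := by
      intro a b hab
      exact Fin.ext (iter_inj' h v (Nat.lt_succ_iff.mp a.2) (Nat.lt_succ_iff.mp b.2) hab)
    simpa using Fintype.card_le_of_injective _ hinj
  omega

lemma treePathAux_eq' (h : ∀ v, ∃ k, T^[k] v = i) :
    ∀ (m : ℕ) (v : Fin n), Nat.find (h v) ≤ m →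
    treePathAux T i m v = (List.range (Nat.find (h v) + 1)).map (fun a => T^[a] v)
  | 0, v, hm => by
    have h0 : Nat.find (h v) = 0 := Nat.le_zero.mp hm
    have hv : v = i := (find_eq_zero_iff' h v).mp h0
    simp [treePathAux, h0]
  | m+1, v, hm => by
    by_cases hv : v = i
    · have h0 : Nat.find (h v) = 0 := (find_eq_zero_iff' h v).mpr hv
      simp [treePathAux, hv, h0]
    · have hs := find_succ' h v hv
      rw [treePathAux, if_neg hv,
        treePathAux_eq' h m (T v) (by omega), hs, List.range_succ_eq_map]
      simp [List.map_map, Function.comp_def, Function.iterate_succ_apply]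

lemma zip_tail_range_map' {α : Type*} :
    ∀ (k : ℕ) (f : ℕ → α),
    (((List.range (k+1)).map f).zip ((List.range (k+1)).map f).tail)
      = (List.range k).map (fun a => (f a, f (a+1)))
  | 0, f => by simp [List.range_succ]
  | k+1, f => by
    have ih := zip_tail_range_map' k (fun a => f (a+1))
    have h1 : (List.range (k+1+1)).map f
        = f 0 :: (List.range (k+1)).map (fun a => f (a+1)) := by
      rw [List.range_succ_eq_map]; simp [List.map_map, Function.comp_def]
    have h2 : (List.range (k+1)).map (fun a => f (a+1))
        = f 1 :: (List.range k).map (fun a => f (a+2)) := by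
      rw [List.range_succ_eq_map]; simp [List.map_map, Function.comp_def]
    have h3 : (List.range (k+1)).map (fun a => (f a, f (a+1)))
        = (f 0, f 1) :: (List.range k).map (fun a => (f (a+1), f (a+2))) := by
      rw [List.range_succ_eq_map]; simp [List.map_map, Function.comp_def]
    rw [h2, List.tail_cons] at ih
    rw [h1, h2, h3, List.tail_cons, List.zip_cons_cons, ih]

lemma list_sum_range' (f : ℕ → ℝ) (k : ℕ) :
    ((List.range k).map f).sum = ∑ b ∈ Finset.range k, f b := by
  induction k with
  | zero => simp
  | succ k ih => rw [List.range_succ, Finset.sum_range_succ]; simp [ih]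

end AuxRev

/-- Weight identity for the tree-reversal bijection:
`q(Φ_{i,j}(T)) = exp (-S(T_j)) · q(T)`. -/
theorem reverseTree_weight {n : ℕ} (ℓ : Fin n → Fin n → ℝ)
    (hℓ : ∀ i j, 0 ≤ ℓ i j) (hsc : StronglyConnected ℓ) (hrev : Reversible ℓ)
    (i j : Fin n) (hij : i ≠ j) (T : Fin n → Fin n) (hT : T ∈ Trees ℓ i) :
    treeWeight ℓ j (reverseTree T i j) =
      Real.exp (-pathAction ℓ (treePath T i j)) * treeWeight ℓ i T := by
  classical
  rw [Trees, Finset.mem_filter] at hT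
  obtain ⟨-, hroot, hedge, hreach⟩ := hT
  set f : ℕ → Fin n := fun a => T^[a] j with hf
  set k : ℕ := Nat.find (hreach j) with hkdef
  have hfk : f k = i := Nat.find_spec (hreach j)
  have hf0 : f 0 = j := rfl
  have hinj : ∀ {a b : ℕ}, a ≤ k → b ≤ k → f a = f b → a = b :=
    fun ha hb hab => iter_inj' hreach j ha hb hab
  have hP : treePath T i j = (List.range (k+1)).map f := by
    rw [treePath]
    exact treePathAux_eq' hreach n j (find_lt' hreach j).le
  have hE : (treePath T i j).zip (treePath T i j).tail
      = (List.range k).map (fun a => (f a, f (a+1))) := by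
    rw [hP]; exact zip_tail_range_map' k f
  have hfne : ∀ b, b < k → f b ≠ i := by
    intro b hb hfb
    have : Nat.find (hreach j) ≤ b := Nat.find_le hfb
    omega
  have hTf : ∀ b, T (f b) = f (b+1) :=
    fun b => (Function.iterate_succ_apply' T b j).symm
  have hpos : ∀ b, b < k → 0 < ℓ (f b) (f (b+1)) := by
    intro b hb; rw [← hTf b]; exact hedge _ (hfne b hb)
  have hpos' : ∀ b, b < k → 0 < ℓ (f (b+1)) (f b) :=
    fun b hb => (hrev _ _).mp (hpos b hb)
  -- values of the reversed tree
  have hΦrev : ∀ b, b < k → reverseTree T i j (f (b+1)) = f b := by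
    intro b hb
    have hmem : ((f b, f (b+1)) : Fin n × Fin n)
        ∈ (List.range k).map (fun a => (f a, f (a+1))) :=
      List.mem_map.mpr ⟨b, List.mem_range.mpr hb, rfl⟩
    have hsome : (((List.range k).map (fun a => (f a, f (a+1)))).find?
        (fun e => e.2 == f (b+1))).isSome :=
      List.find?_isSome.mpr ⟨_, hmem, by simp⟩
    obtain ⟨e, he⟩ := Option.isSome_iff_exists.mp hsome
    obtain ⟨a, haR, hae⟩ := List.mem_map.mp (List.mem_of_find?_eq_some he)
    rw [List.mem_range] at haR
    have he2 : e.2 = f (b+1) := by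
      have hep := List.find?_some he
      simpa using hep
    have he2' : f (a+1) = f (b+1) := by rw [← hae] at he2; exact he2
    have hab : a + 1 = b + 1 := hinj (by omega) (by omega) he2'
    simp only [reverseTree]
    rw [hE, he]
    simp only [Option.elim]
    rw [← hae]
    simpa using congrArg f (by omega : a = b)
  have hΦoff : ∀ v : Fin n, (∀ a, a ≤ k → f a ≠ v) → reverseTree T i j v = T v := by
    intro v hv
    have hnone : (((List.range k).map (fun a => (f a, f (a+1)))).find?
        (fun e => e.2 == v)) = none := by
      rw [List.find?_eq_none]
      intro e hexy
      obtain ⟨a, haR, hae⟩ := List.mem_map.mp hexy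
      rw [List.mem_range] at haR
      have : e.2 = f (a+1) := by rw [← hae]
      simp only [this, beq_iff_eq]
      exact hv (a+1) (by omega)
    have hvj : v ≠ j := by
      intro hvj
      exact hv 0 (Nat.zero_le _) (by rw [hf0, hvj])
    simp only [reverseTree]
    rw [hE, hnone]
    simp [Option.elim, hvj]
  -- the vertex set of the path
  set V : Finset (Fin n) := (Finset.range (k+1)).image f with hV
  have hiV : i ∈ V := Finset.mem_image.mpr ⟨k, Finset.mem_range.mpr (by omega), hfk⟩
  have hjV : j ∈ V := Finset.mem_image.mpr ⟨0, Finset.mem_range.mpr (by omega), hf0⟩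
  have hsplit : ∀ (r : Fin n) (g : Fin n → Fin n),
      treeWeight ℓ r g = (∏ v ∈ (univ.filter (· ≠ r)).filter (· ∈ V), ℓ v (g v)) *
        ∏ v ∈ (univ.filter (· ≠ r)).filter (fun v => v ∉ V), ℓ v (g v) :=
    fun r g => (Finset.prod_filter_mul_prod_filter_not _ _ _).symm
  have hoff : ∀ r : Fin n, r ∈ V →
      (univ.filter (· ≠ r)).filter (fun v => v ∉ V) = univ.filter (fun v => v ∉ V) := by
    intro r hr
    ext v
    simp only [Finset.mem_filter, Finset.mem_univ, true_and]
    constructor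
    · rintro ⟨-, h2⟩; exact h2
    · intro h2; exact ⟨fun hv => h2 (hv ▸ hr), h2⟩
  -- on-path sets
  have honI : (univ.filter (· ≠ i)).filter (· ∈ V) = (Finset.range k).image f := by
    ext v
    simp only [Finset.mem_filter, Finset.mem_univ, true_and, hV, Finset.mem_image,
      Finset.mem_range]
    constructor
    · rintro ⟨hne, a, ha, rfl⟩
      refine ⟨a, ?_, rfl⟩
      rcases Nat.lt_succ_iff_lt_or_eq.mp ha with h | h
      · exact h
      · exact absurd (h ▸ hfk) hne
    · rintro ⟨a, ha, rfl⟩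
      exact ⟨hfne a ha, a, by omega, rfl⟩
  have honJ : (univ.filter (· ≠ j)).filter (· ∈ V)
      = (Finset.range k).image (fun b => f (b+1)) := by
    ext v
    simp only [Finset.mem_filter, Finset.mem_univ, true_and, hV, Finset.mem_image,
      Finset.mem_range]
    constructor
    · rintro ⟨hne, a, ha, rfl⟩
      have ha0 : a ≠ 0 := by
        intro h0; exact hne (by rw [h0, hf0])
      exact ⟨a - 1, by omega, by rw [Nat.sub_add_cancel (by omega)]⟩
    · rintro ⟨b, hb, rfl⟩
      refine ⟨?_, b + 1, by omega, rfl⟩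
      intro hbj
      have : b + 1 = 0 := hinj (by omega) (by omega) (by rw [hbj, hf0])
      omega
  -- the three product computations
  have hprodI : ∏ v ∈ (univ.filter (· ≠ i)).filter (· ∈ V), ℓ v (T v)
      = ∏ b ∈ Finset.range k, ℓ (f b) (f (b+1)) := by
    rw [honI, Finset.prod_image (fun a ha b hb hab =>
      hinj (by simp at ha; omega) (by simp at hb; omega) hab)]
    exact Finset.prod_congr rfl fun b hb => by rw [hTf b]
  have hprodJ : ∏ v ∈ (univ.filter (· ≠ j)).filter (· ∈ V), ℓ v (reverseTree T i j v)
      = ∏ b ∈ Finset.range k, ℓ (f (b+1)) (f b) := by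
    rw [honJ, Finset.prod_image (fun a ha b hb hab => by
      have := hinj (a := a+1) (b := b+1) (by simp at ha; omega) (by simp at hb; omega) hab
      omega)]
    exact Finset.prod_congr rfl fun b hb => by
      rw [hΦrev b (Finset.mem_range.mp hb)]
  have hprodOff : ∏ v ∈ univ.filter (fun v => v ∉ V), ℓ v (reverseTree T i j v)
      = ∏ v ∈ univ.filter (fun v => v ∉ V), ℓ v (T v) := by
    refine Finset.prod_congr rfl fun v hv => ?_
    rw [Finset.mem_filter] at hv
    rw [hΦoff v fun a ha hav => hv.2 (Finset.mem_image.mpr ⟨a, Finset.mem_range.mpr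
      (by omega), hav⟩)]
  -- the action
  have hS : pathAction ℓ (treePath T i j)
      = ∑ b ∈ Finset.range k, Real.log (ℓ (f b) (f (b+1)) / ℓ (f (b+1)) (f b)) := by
    rw [pathAction, hE, List.map_map]
    exact list_sum_range' _ k
  have hexp : Real.exp (-pathAction ℓ (treePath T i j))
      = ∏ b ∈ Finset.range k, (ℓ (f (b+1)) (f b) / ℓ (f b) (f (b+1))) := by
    rw [hS, Real.exp_neg, Real.exp_sum, ← Finset.prod_inv_distrib]
    refine Finset.prod_congr rfl fun b hb => ?_
    have hb' := Finset.mem_range.mp hb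
    rw [Real.exp_log (div_pos (hpos b hb') (hpos' b hb')), inv_div]
  -- put it together
  rw [hsplit j (reverseTree T i j), hsplit i T, hoff j hjV, hoff i hiV,
    hprodI, hprodJ, hprodOff, hexp]
  rw [← mul_assoc, mul_comm (∏ b ∈ Finset.range k, ℓ (f (b+1)) (f b) / ℓ (f b) (f (b+1)))
    (∏ b ∈ Finset.range k, ℓ (f b) (f (b+1)))]
  rw [mul_comm (∏ b ∈ Finset.range k, ℓ (f b) (f (b+1)))
    (∏ b ∈ Finset.range k, ℓ (f (b+1)) (f b) / ℓ (f b) (f (b+1)))]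
  rw [← Finset.prod_mul_distrib]
  congr 1
  refine Finset.prod_congr rfl fun b hb => ?_
  have hb' := Finset.mem_range.mp hb
  rw [div_mul_cancel₀ _ (hpos b hb').ne']
end
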